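/- Let p be a monic complex polynomial of degree n ≥ 2. Then there exists a normal n×n complex matrix A (i.e., A·Aᴴ = Aᴴ·A) such that det(A − z·I_n) = (−1)^n·p(z) for all z ∈ ℂ, and for every 1 ≤ i ≤ n, det(A_{[i]} − z·I_{n−1}) = ((−1)^{n−1}/n)·p'(z) for all z ∈ ℂ. -/

import Mathlib

open Polynomial

/-- The embedding `Fin (n-1) → Fin n` skipping the index `i`. -/
def skipIdx {n : ℕ} (i : Fin n) (j : Fin (n - 1)) : Fin n :=
  if (j : ℕ) < (i : ℕ) then ⟨(j : ℕ), by have := i.isLt; have := j.isLt; omega⟩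
  else ⟨(j : ℕ) + 1, by have := j.isLt; omega⟩

/-- The degeneracy one principal submatrix `A_{[i]}` obtained by deleting the `i`-th row
and `i`-th column of `A`. -/
def subDel {n : ℕ} (A : Matrix (Fin n) (Fin n) ℂ) (i : Fin n) :
    Matrix (Fin (n - 1)) (Fin (n - 1)) ℂ :=
  Matrix.of fun j k => A (skipIdx i j) (skipIdx i k)



lemma sum_zpow_eq {n : ℕ} (hn : 2 ≤ n) {ζ : ℂ} (hζ : IsPrimitiveRoot ζ n)
    (i k : Fin n) :
    ∑ m : Fin n, ζ ^ ((((i:ℕ):ℤ) - ((k:ℕ):ℤ)) * ((m:ℕ):ℤ)) = if i = k then (n:ℂ) else 0 := by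
  have hrw : ∀ m : Fin n, ζ ^ ((((i:ℕ):ℤ) - ((k:ℕ):ℤ)) * ((m:ℕ):ℤ))
      = (ζ ^ (((i:ℕ):ℤ) - ((k:ℕ):ℤ))) ^ (m:ℕ) := by
    intro m; rw [zpow_mul, zpow_natCast]
  simp_rw [hrw]
  rw [Fin.sum_univ_eq_sum_range (fun j => (ζ ^ (((i:ℕ):ℤ) - ((k:ℕ):ℤ))) ^ j) n]
  by_cases h : i = k
  · subst h
    simp
  · rw [if_neg h]
    have hd0 : (((i:ℕ):ℤ) - ((k:ℕ):ℤ)) ≠ 0 := by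
      intro hh
      exact h (Fin.ext (by omega))
    have hx1 : ζ ^ (((i:ℕ):ℤ) - ((k:ℕ):ℤ)) ≠ 1 := by
      intro hx
      have hdvd := (hζ.zpow_eq_one_iff_dvd _).mp hx
      have h1 : (n:ℤ) ∣ |(((i:ℕ):ℤ) - ((k:ℕ):ℤ))| := (dvd_abs _ _).mpr hdvd
      have h2 : |(((i:ℕ):ℤ) - ((k:ℕ):ℤ))| < n := by
        have hi := i.isLt; have hk := k.isLt
        rw [abs_lt]; omega
      have h3 := Int.le_of_dvd (abs_pos.mpr hd0) h1
      omega
    rw [geom_sum_eq hx1]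
    have hxn : (ζ ^ (((i:ℕ):ℤ) - ((k:ℕ):ℤ))) ^ n = 1 := by
      rw [← zpow_natCast (ζ ^ (((i:ℕ):ℤ) - ((k:ℕ):ℤ))) n, ← zpow_mul, mul_comm, zpow_mul,
        hζ.zpow_eq_one, one_zpow]
    rw [hxn, sub_self, zero_div]

lemma skipIdx_eq_succAbove {m : ℕ} (i : Fin (m+1)) (j : Fin (m+1-1)) :
    skipIdx i j = i.succAbove j := by
  have hc : ((j:ℕ) < (i:ℕ)) ↔ (Fin.castSucc j < i) := by
    simp [Fin.lt_def]
  rw [skipIdx, Fin.succAbove]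
  by_cases h : (j:ℕ) < (i:ℕ)
  · rw [if_pos h, if_pos (hc.mp h)]
    apply Fin.ext; simp
  · rw [if_neg h, if_neg (fun hh => h (hc.mpr hh))]
    apply Fin.ext; simp

lemma subDel_eq_submatrix {m : ℕ} (M : Matrix (Fin (m+1)) (Fin (m+1)) ℂ) (i : Fin (m+1)) :
    subDel M i = M.submatrix i.succAbove i.succAbove := by
  ext j k
  simp [subDel, skipIdx_eq_succAbove]

lemma det_subDel_eq_adjugate {m : ℕ} (M : Matrix (Fin (m+1)) (Fin (m+1)) ℂ) (i : Fin (m+1)) :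
    (subDel M i).det = M.adjugate i i := by
  rw [subDel_eq_submatrix, Matrix.adjugate_fin_succ_eq_det_submatrix]
  rw [show ((i:ℕ) + (i:ℕ)) = 2 * (i:ℕ) by ring, pow_mul]
  norm_num

lemma derivative_finset_prod {ι : Type*} [DecidableEq ι] (s : Finset ι) (f : ι → Polynomial ℂ) :
    Polynomial.derivative (∏ i ∈ s, f i)
      = ∑ i ∈ s, (∏ j ∈ s.erase i, f j) * Polynomial.derivative (f i) := by
  rw [Finset.prod_eq_multiset_prod, Polynomial.derivative_prod, Finset.sum_eq_multiset_sum]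
  apply congrArg Multiset.sum
  apply Multiset.map_congr rfl
  intro i hi
  rw [← Finset.erase_val, ← Finset.prod_eq_multiset_prod]

/-- Every monic complex polynomial `p` of degree `n ≥ 2` is realized (up to `(-1)^n`) as the
characteristic polynomial of a normal `n × n` matrix `A` each of whose degeneracy one
principal submatrices has characteristic polynomial `((-1)^{n-1}/n)·p'`. -/
theorem exists_normal_matrix_differentiator (n : ℕ) (hn : 2 ≤ n)
    (p : Polynomial ℂ) (hmonic : p.Monic) (hdeg : p.natDegree = n) :
    ∃ A : Matrix (Fin n) (Fin n) ℂ,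
      A * A.conjTranspose = A.conjTranspose * A ∧
      (∀ z : ℂ, (A - z • (1 : Matrix (Fin n) (Fin n) ℂ)).det = (-1) ^ n * p.eval z) ∧
      ∀ i : Fin n, ∀ z : ℂ,
        ((subDel A i) - z • (1 : Matrix (Fin (n - 1)) (Fin (n - 1)) ℂ)).det
          = ((-1) ^ (n - 1) / (n : ℂ)) * (Polynomial.derivative p).eval z := by
  obtain ⟨m, rfl⟩ : ∃ m, n = m + 1 := ⟨n - 1, by omega⟩
  have hn0 : ((m+1:ℕ):ℂ) ≠ 0 := Nat.cast_ne_zero.mpr (by omega)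
  -- roots of p
  have hsplit : p.Splits := IsAlgClosed.splits p
  have hcard : p.roots.card = m + 1 := by
    rw [Polynomial.splits_iff_card_roots.mp hsplit, hdeg]
  set l := p.roots.toList with hl
  have hlen : l.length = m + 1 := by rw [hl, Multiset.length_toList, hcard]
  set lam : Fin (m+1) → ℂ := fun j => l.get (Fin.cast hlen.symm j) with hlam
  have hp : p = ∏ j : Fin (m+1), (X - C (lam j)) := by
    have h0 : p = (p.roots.map fun a => X - C a).prod :=
      hsplit.eq_prod_roots_of_monic hmonic
    rw [h0, ← Multiset.coe_toList p.roots, ← hl, Multiset.map_coe, Multiset.prod_coe,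
      ← Fin.prod_univ_fun_getElem l (fun a => X - C a)]
    apply Finset.prod_nbij (fun i => Fin.cast hlen i)
    · intro a _; exact Finset.mem_univ _
    · intro a _ b _ h; exact Fin.ext (by simpa using congrArg Fin.val h)
    · intro b _; exact ⟨Fin.cast hlen.symm b, Finset.mem_univ _, rfl⟩
    · intro a _; rfl
  -- primitive root
  set ζ : ℂ := Complex.exp (2 * Real.pi * Complex.I / ((m+1:ℕ):ℂ)) with hzeta
  have hζ : IsPrimitiveRoot ζ (m+1) := Complex.isPrimitiveRoot_exp (m+1) (by omega)
  have hζ0 : ζ ≠ 0 := Complex.exp_ne_zero _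
  have habs : ‖ζ‖ = 1 := by
    rw [hzeta, show 2*Real.pi*Complex.I/((m+1:ℕ):ℂ) = ((2*Real.pi/(m+1) : ℝ) : ℂ) * Complex.I by
      push_cast; ring]
    exact Complex.norm_exp_ofReal_mul_I _
  have hstar : star ζ = ζ⁻¹ := by
    rw [Complex.star_def, ← Complex.inv_eq_conj habs]
  have hpow : ∀ a b : ℕ, ζ ^ a * star (ζ ^ b) = ζ ^ ((a:ℤ) - (b:ℤ)) := by
    intro a b
    rw [star_pow, hstar, inv_pow, ← zpow_natCast ζ a, ← zpow_natCast ζ b,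
      zpow_sub₀ hζ0, div_eq_mul_inv]
  -- DFT matrix
  set G : Matrix (Fin (m+1)) (Fin (m+1)) ℂ :=
    Matrix.of (fun i k : Fin (m+1) => ζ ^ ((i:ℕ) * (k:ℕ))) with hG
  have hGGt : G * G.conjTranspose = ((m+1:ℕ):ℂ) • (1 : Matrix (Fin (m+1)) (Fin (m+1)) ℂ) := by
    ext i k
    rw [Matrix.mul_apply]
    have hterm : ∀ j : Fin (m+1),
        G i j * G.conjTranspose j k = ζ ^ ((((i:ℕ):ℤ) - ((k:ℕ):ℤ)) * ((j:ℕ):ℤ)) := by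
      intro j
      rw [Matrix.conjTranspose_apply, hG]
      show ζ ^ ((i:ℕ) * (j:ℕ)) * star (ζ ^ ((k:ℕ) * (j:ℕ))) = _
      rw [hpow]
      congr 1
      push_cast
      ring
    rw [Finset.sum_congr rfl (fun j _ => hterm j), sum_zpow_eq (by omega) hζ i k]
    by_cases h : i = k <;> simp [h, Matrix.one_apply]
  have hGtG : G.conjTranspose * G = ((m+1:ℕ):ℂ) • (1 : Matrix (Fin (m+1)) (Fin (m+1)) ℂ) := by
    ext i k
    rw [Matrix.mul_apply]
    have hterm : ∀ j : Fin (m+1),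
        G.conjTranspose i j * G j k = ζ ^ ((((k:ℕ):ℤ) - ((i:ℕ):ℤ)) * ((j:ℕ):ℤ)) := by
      intro j
      rw [Matrix.conjTranspose_apply, hG]
      show star (ζ ^ ((j:ℕ) * (i:ℕ))) * ζ ^ ((j:ℕ) * (k:ℕ)) = _
      rw [mul_comm, hpow]
      congr 1
      push_cast
      ring
    rw [Finset.sum_congr rfl (fun j _ => hterm j), sum_zpow_eq (by omega) hζ k i]
    by_cases h : i = k <;> simp [h, eq_comm, Matrix.one_apply]
  have hdetn : G.det * G.conjTranspose.det = ((m+1:ℕ):ℂ) ^ (m+1) := by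
    rw [← Matrix.det_mul, hGGt, Matrix.det_smul, Matrix.det_one, mul_one,
      Fintype.card_fin]
  set A : Matrix (Fin (m+1)) (Fin (m+1)) ℂ :=
    ((m+1:ℕ):ℂ)⁻¹ • (G * Matrix.diagonal lam * G.conjTranspose) with hA
  -- general product identity
  have hmul : ∀ v w : Fin (m+1) → ℂ,
      (((m+1:ℕ):ℂ)⁻¹ • (G * Matrix.diagonal v * G.conjTranspose)) *
        (((m+1:ℕ):ℂ)⁻¹ • (G * Matrix.diagonal w * G.conjTranspose))
        = ((m+1:ℕ):ℂ)⁻¹ • (G * Matrix.diagonal (fun j => v j * w j) * G.conjTranspose) := by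
    intro v w
    rw [Matrix.smul_mul, Matrix.mul_smul, smul_smul]
    have : (G * Matrix.diagonal v * G.conjTranspose) * (G * Matrix.diagonal w * G.conjTranspose)
        = ((m+1:ℕ):ℂ) • (G * Matrix.diagonal (fun j => v j * w j) * G.conjTranspose) := by
      calc (G * Matrix.diagonal v * G.conjTranspose) * (G * Matrix.diagonal w * G.conjTranspose)
          = G * Matrix.diagonal v * (G.conjTranspose * G) * (Matrix.diagonal w * G.conjTranspose) := by
            simp only [Matrix.mul_assoc]
        _ = ((m+1:ℕ):ℂ) • (G * Matrix.diagonal v * (Matrix.diagonal w * G.conjTranspose)) := by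
            rw [hGtG, Matrix.mul_smul, Matrix.mul_one, Matrix.smul_mul]
        _ = ((m+1:ℕ):ℂ) • (G * Matrix.diagonal (fun j => v j * w j) * G.conjTranspose) := by
            rw [Matrix.mul_assoc G, ← Matrix.mul_assoc (Matrix.diagonal v),
              Matrix.diagonal_mul_diagonal, Matrix.mul_assoc G]
    rw [this, smul_smul, mul_comm (((m+1:ℕ):ℂ)⁻¹), mul_assoc,
      inv_mul_cancel₀ hn0, mul_one]
  have hAH : A.conjTranspose
      = ((m+1:ℕ):ℂ)⁻¹ • (G * Matrix.diagonal (fun j => star (lam j)) * G.conjTranspose) := by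
    rw [hA, Matrix.conjTranspose_smul, Matrix.conjTranspose_mul, Matrix.conjTranspose_mul,
      Matrix.conjTranspose_conjTranspose, Matrix.diagonal_conjTranspose]
    congr 1
    · simp
    · rw [Matrix.mul_assoc]
      rfl
  refine ⟨A, ?_, ?_, ?_⟩
  · -- normality
    rw [hAH, hA, hmul, hmul,
      show (fun j => lam j * star (lam j)) = (fun j => star (lam j) * lam j) from
        funext fun j => mul_comm _ _]
  · intro z
    have hdiag : Matrix.diagonal (fun j => lam j - z)
        = Matrix.diagonal lam - z • (1 : Matrix (Fin (m+1)) (Fin (m+1)) ℂ) := by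
      have h1 : z • (1 : Matrix (Fin (m+1)) (Fin (m+1)) ℂ)
          = Matrix.diagonal (fun _ => z) := by
        ext a b; by_cases h : a = b <;> simp [h, Matrix.one_apply]
      rw [h1, Matrix.diagonal_sub]
    have hAz : A - z • (1 : Matrix (Fin (m+1)) (Fin (m+1)) ℂ)
        = ((m+1:ℕ):ℂ)⁻¹ • (G * Matrix.diagonal (fun j => lam j - z) * G.conjTranspose) := by
      rw [hdiag, Matrix.mul_sub, Matrix.sub_mul, smul_sub, hA]
      congr 1
      rw [Matrix.mul_smul, Matrix.mul_one, Matrix.smul_mul, hGGt, smul_smul, smul_smul,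
        show ((m+1:ℕ):ℂ)⁻¹ * z * ((m+1:ℕ):ℂ) = z from by
          rw [mul_comm (((m+1:ℕ):ℂ))⁻¹ z, mul_assoc, inv_mul_cancel₀ hn0, mul_one]]
    have hev : p.eval z = ∏ j, (z - lam j) := by
      rw [hp]; simp [eval_prod]
    have h2 : (∏ j, (lam j - z)) = (-1:ℂ)^(m+1) * ∏ j, (z - lam j) := by
      calc ∏ j, (lam j - z) = ∏ j : Fin (m+1), (-1) * (z - lam j) :=
          Finset.prod_congr rfl (fun j _ => by ring)
        _ = _ := by
          rw [Finset.prod_mul_distrib, Finset.prod_const, Finset.card_univ, Fintype.card_fin]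
    rw [hAz, Matrix.det_smul, Matrix.det_mul, Matrix.det_mul, Matrix.det_diagonal,
      Fintype.card_fin, hev, h2]
    calc ((m+1:ℕ):ℂ)⁻¹ ^ (m+1) * (G.det * ((-1:ℂ)^(m+1) * ∏ j, (z - lam j)) * G.conjTranspose.det)
        = (((m+1:ℕ):ℂ)⁻¹ ^ (m+1) * (G.det * G.conjTranspose.det))
            * ((-1:ℂ)^(m+1) * ∏ j, (z - lam j)) := by ring
      _ = (-1:ℂ)^(m+1) * ∏ j, (z - lam j) := by
          rw [hdetn, inv_pow, inv_mul_cancel₀ (pow_ne_zero _ hn0), one_mul]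
  · intro i z
    have hdiag : Matrix.diagonal (fun j => lam j - z)
        = Matrix.diagonal lam - z • (1 : Matrix (Fin (m+1)) (Fin (m+1)) ℂ) := by
      have h1 : z • (1 : Matrix (Fin (m+1)) (Fin (m+1)) ℂ)
          = Matrix.diagonal (fun _ => z) := by
        ext a b; by_cases h : a = b <;> simp [h, Matrix.one_apply]
      rw [h1, Matrix.diagonal_sub]
    have hAz : A - z • (1 : Matrix (Fin (m+1)) (Fin (m+1)) ℂ)
        = ((m+1:ℕ):ℂ)⁻¹ • (G * Matrix.diagonal (fun j => lam j - z) * G.conjTranspose) := by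
      rw [hdiag, Matrix.mul_sub, Matrix.sub_mul, smul_sub, hA]
      congr 1
      rw [Matrix.mul_smul, Matrix.mul_one, Matrix.smul_mul, hGGt, smul_smul, smul_smul,
        show ((m+1:ℕ):ℂ)⁻¹ * z * ((m+1:ℕ):ℂ) = z from by
          rw [mul_comm (((m+1:ℕ):ℂ))⁻¹ z, mul_assoc, inv_mul_cancel₀ hn0, mul_one]]
    -- step 1: reduce to adjugate diagonal entry
    have hsub : subDel A i - z • (1 : Matrix (Fin (m+1-1)) (Fin (m+1-1)) ℂ)
        = subDel (A - z • (1 : Matrix (Fin (m+1)) (Fin (m+1)) ℂ)) i := by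
      ext j k
      by_cases h : j = k
      · subst h
        simp [subDel, Matrix.sub_apply, Matrix.one_apply, skipIdx_eq_succAbove]
      · have h2 : i.succAbove j ≠ i.succAbove k := fun hh => h (Fin.succAbove_right_injective hh)
        simp [subDel, Matrix.sub_apply, Matrix.one_apply, skipIdx_eq_succAbove, h, h2]
    rw [hsub, det_subDel_eq_adjugate]
    -- adjugates of G and Gᴴ
    have hadjG : G.adjugate = (((m+1:ℕ):ℂ)⁻¹ * G.det) • G.conjTranspose := by
      have h1 : (((m+1:ℕ):ℂ)⁻¹ • G.conjTranspose) * G = 1 := by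
        rw [Matrix.smul_mul, hGtG, smul_smul, inv_mul_cancel₀ hn0, one_smul]
      calc G.adjugate = ((((m+1:ℕ):ℂ)⁻¹ • G.conjTranspose) * G) * G.adjugate := by
            rw [h1, Matrix.one_mul]
        _ = (((m+1:ℕ):ℂ)⁻¹ • G.conjTranspose) * (G * G.adjugate) := by
            rw [Matrix.mul_assoc]
        _ = (((m+1:ℕ):ℂ)⁻¹ • G.conjTranspose) * (G.det • 1) := by
            rw [Matrix.mul_adjugate]
        _ = (((m+1:ℕ):ℂ)⁻¹ * G.det) • G.conjTranspose := by
            rw [Matrix.smul_mul, Matrix.mul_smul, Matrix.mul_one, smul_smul]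
    have hadjGt : G.conjTranspose.adjugate = (((m+1:ℕ):ℂ)⁻¹ * G.conjTranspose.det) • G := by
      have h1 : (((m+1:ℕ):ℂ)⁻¹ • G) * G.conjTranspose = 1 := by
        rw [Matrix.smul_mul, hGGt, smul_smul, inv_mul_cancel₀ hn0, one_smul]
      calc G.conjTranspose.adjugate
          = ((((m+1:ℕ):ℂ)⁻¹ • G) * G.conjTranspose) * G.conjTranspose.adjugate := by
            rw [h1, Matrix.one_mul]
        _ = (((m+1:ℕ):ℂ)⁻¹ • G) * (G.conjTranspose * G.conjTranspose.adjugate) := by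
            rw [Matrix.mul_assoc]
        _ = (((m+1:ℕ):ℂ)⁻¹ • G) * (G.conjTranspose.det • 1) := by
            rw [Matrix.mul_adjugate]
        _ = (((m+1:ℕ):ℂ)⁻¹ * G.conjTranspose.det) • G := by
            rw [Matrix.smul_mul, Matrix.mul_smul, Matrix.mul_one, smul_smul]
    have hadjE : (Matrix.diagonal (fun j => lam j - z)).adjugate
        = Matrix.diagonal (fun j => ∏ k ∈ Finset.univ.erase j, (lam k - z)) :=
      Matrix.adjugate_diagonal _
    have hadjM : (A - z • (1 : Matrix (Fin (m+1)) (Fin (m+1)) ℂ)).adjugate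
        = ((m+1:ℕ):ℂ)⁻¹ • (G * Matrix.diagonal (fun j => ∏ k ∈ Finset.univ.erase j, (lam k - z))
            * G.conjTranspose) := by
      rw [hAz, Matrix.adjugate_smul, Matrix.adjugate_mul_distrib, Matrix.adjugate_mul_distrib,
        hadjG, hadjGt, hadjE, Fintype.card_fin]
      have hs : (((m+1:ℕ):ℂ)⁻¹ ^ (m+1-1)
            * (((m+1:ℕ):ℂ)⁻¹ * G.conjTranspose.det) * (((m+1:ℕ):ℂ)⁻¹ * G.det))
          = ((m+1:ℕ):ℂ)⁻¹ := by
        rw [show m+1-1 = m from rfl, inv_pow]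
        rw [show (((m+1:ℕ):ℂ)^m)⁻¹ * (((m+1:ℕ):ℂ)⁻¹ * G.conjTranspose.det)
              * (((m+1:ℕ):ℂ)⁻¹ * G.det)
            = (((m+1:ℕ):ℂ)^m)⁻¹ * ((m+1:ℕ):ℂ)⁻¹ * ((m+1:ℕ):ℂ)⁻¹
              * (G.det * G.conjTranspose.det) from by ring, hdetn, pow_succ]
        have h8 : ((m+1:ℕ):ℂ)^m ≠ 0 := pow_ne_zero _ hn0
        rw [show (((m+1:ℕ):ℂ)^m)⁻¹ * ((m+1:ℕ):ℂ)⁻¹ * ((m+1:ℕ):ℂ)⁻¹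
              * (((m+1:ℕ):ℂ)^m * ((m+1:ℕ):ℂ))
            = (((m+1:ℕ):ℂ)^m)⁻¹ * ((m+1:ℕ):ℂ)^m * (((m+1:ℕ):ℂ)⁻¹ * ((m+1:ℕ):ℂ))
              * ((m+1:ℕ):ℂ)⁻¹ from by ring,
          inv_mul_cancel₀ h8, inv_mul_cancel₀ hn0, one_mul, one_mul]
      rw [Matrix.smul_mul, Matrix.mul_smul, smul_smul, Matrix.mul_smul, smul_smul, hs,
        ← Matrix.mul_assoc]
    rw [hadjM, Matrix.smul_apply]
    have hdiagentry : (G * Matrix.diagonal (fun j => ∏ k ∈ Finset.univ.erase j, (lam k - z))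
        * G.conjTranspose) i i = ∑ j, ∏ k ∈ Finset.univ.erase j, (lam k - z) := by
      rw [Matrix.mul_apply]
      have hterm : ∀ j : Fin (m+1),
          (G * Matrix.diagonal (fun j => ∏ k ∈ Finset.univ.erase j, (lam k - z))) i j
            * G.conjTranspose j i = ∏ k ∈ Finset.univ.erase j, (lam k - z) := by
        intro j
        rw [Matrix.mul_diagonal, Matrix.conjTranspose_apply, hG]
        show ζ ^ ((i:ℕ) * (j:ℕ)) * (∏ k ∈ Finset.univ.erase j, (lam k - z))
            * star (ζ ^ ((i:ℕ) * (j:ℕ))) = _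
        rw [mul_comm (ζ ^ ((i:ℕ) * (j:ℕ))), mul_assoc, hpow, sub_self, zpow_zero, mul_one]
      rw [Finset.sum_congr rfl (fun j _ => hterm j)]
    rw [hdiagentry]
    -- derivative
    have hder : (Polynomial.derivative p).eval z = ∑ j, ∏ k ∈ Finset.univ.erase j, (z - lam k) := by
      rw [hp, derivative_finset_prod]
      simp [Polynomial.eval_finset_sum, Polynomial.eval_prod]
    have hswap : (∑ j, ∏ k ∈ Finset.univ.erase j, (lam k - z))
        = (-1:ℂ)^m * ∑ j, ∏ k ∈ Finset.univ.erase j, (z - lam k) := by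
      rw [Finset.mul_sum]
      refine Finset.sum_congr rfl (fun j _ => ?_)
      calc ∏ k ∈ Finset.univ.erase j, (lam k - z)
          = ∏ k ∈ Finset.univ.erase j, (-1) * (z - lam k) :=
            Finset.prod_congr rfl (fun k _ => by ring)
        _ = (-1:ℂ)^((Finset.univ.erase j).card) * ∏ k ∈ Finset.univ.erase j, (z - lam k) := by
            rw [Finset.prod_mul_distrib, Finset.prod_const]
        _ = _ := by
            rw [Finset.card_erase_of_mem (Finset.mem_univ j), Finset.card_univ, Fintype.card_fin]
            norm_num
    rw [hswap, hder]
    rw [show m+1-1 = m from rfl]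
    field_simp
    rw [smul_eq_mul, ← mul_assoc, mul_one_div_cancel hn0, one_mul]
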